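/- arXiv:2405.08942 — 13 statements merged into one kernel-verified Lean document; each statement's English description precedes it below -/
import Mathlib

section
/- For any ring R with identity, the Zhou radical δ(R) is a semiprime ideal of R; that is, for every a ∈ R, if a·r·a ∈ δ(R) for all r ∈ R, then a ∈ δ(R). -/
/-- A right ideal `I` of `R` (a submodule of `R` as a right `R`-module, i.e. an
`Rᵐᵒᵖ`-submodule) is essential if every right ideal meeting it trivially is trivial. -/
def IsEssentialRightIdeal (R : Type*) [Ring R] (I : Submodule Rᵐᵒᵖ R) : Prop :=
  ∀ K : Submodule Rᵐᵒᵖ R, K ⊓ I = ⊥ → K = ⊥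

/-- The Zhou radical `δ(R)`: the intersection of all essential maximal right ideals of `R`
(the whole ring if there are no essential maximal right ideals). -/
def zhouRadical (R : Type*) [Ring R] : Set R :=
  ⋂₀ { S : Set R | ∃ I : Submodule Rᵐᵒᵖ R, IsCoatom I ∧ IsEssentialRightIdeal R I ∧ S = ↑I }

/-- A ring `R` is `δ`-reversible if `a * b = 0` implies `b * a ∈ δ(R)`. -/
def IsDeltaReversible (R : Type*) [Ring R] : Prop :=
  ∀ a b : R, a * b = 0 → b * a ∈ zhouRadical R

/-- The Zhou radical is a semiprime ideal: if `a * r * a ∈ δ(R)` for all `r`, then `a ∈ δ(R)`. -/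
theorem zhouRadical_semiprime (R : Type*) [Ring R] (a : R)
    (h : ∀ r : R, a * r * a ∈ zhouRadical R) : a ∈ zhouRadical R := by
  intro S hS
  obtain ⟨I, hco, hess, rfl⟩ := hS
  by_cases ha : a ∈ I
  · exact ha
  · -- I ⊔ span {a} = ⊤
    have htop : I ⊔ Submodule.span Rᵐᵒᵖ {a} = ⊤ := by
      apply hco.2
      refine lt_of_le_of_ne le_sup_left ?_
      intro heq
      exact ha (heq ▸ (le_sup_right : _ ≤ I ⊔ Submodule.span Rᵐᵒᵖ {a}) (Submodule.mem_span_singleton_self a))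
    have h1 : (1 : R) ∈ I ⊔ Submodule.span Rᵐᵒᵖ {a} := htop ▸ Submodule.mem_top
    obtain ⟨m, hm, y, hy, hmy⟩ := Submodule.mem_sup.mp h1
    obtain ⟨c, rfl⟩ := Submodule.mem_span_singleton.mp hy
    have key : a = (MulOpposite.op a) • m + a * c.unop * a := by
      have : (m + c • a) * a = a := by rw [hmy, one_mul]
      calc a = (m + c • a) * a := this.symm
        _ = (MulOpposite.op a) • m + a * c.unop * a := by
          simp [MulOpposite.smul_eq_mul_unop, add_mul, mul_assoc]
    rw [key]
    exact I.add_mem (I.smul_mem _ hm) (h c.unop (↑I) ⟨I, hco, hess, rfl⟩)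
end

section
/- Let R be a ring whose right socle Soc(R_R) is contained in the Jacobson radical J(R). Then R is δ-reversible if and only if R is J-reversible. -/
/-- The Jacobson radical `J(R)`: the intersection of all maximal right ideals of `R`. -/
def jacobsonRight (R : Type*) [Ring R] : Set R :=
  ⋂₀ { S : Set R | ∃ I : Submodule Rᵐᵒᵖ R, IsCoatom I ∧ S = ↑I }

/-- A ring `R` is J-reversible if `a * b = 0` implies `b * a ∈ J(R)`. -/
def IsJReversible (R : Type*) [Ring R] : Prop :=
  ∀ a b : R, a * b = 0 → b * a ∈ jacobsonRight R

/-- The right socle of `R`: the sum of all minimal (simple) right ideals of `R`. -/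
def rightSocle (R : Type*) [Ring R] : Submodule Rᵐᵒᵖ R :=
  sSup {I : Submodule Rᵐᵒᵖ R | IsAtom I}

/-- Under the hypothesis `Soc ⊆ J`, every maximal right ideal is essential. -/
lemma essential_of_coatom (R : Type*) [Ring R]
    (h : (rightSocle R : Set R) ⊆ jacobsonRight R)
    (I : Submodule Rᵐᵒᵖ R) (hI : IsCoatom I) : IsEssentialRightIdeal R I := by
  intro K hKI
  by_contra hK
  -- K is an atom
  have hatom : IsAtom K := by
    refine ⟨hK, fun K' hlt => ?_⟩
    by_contra hK'
    -- I ⊔ K' = ⊤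
    have hle : K' ≤ K := le_of_lt hlt
    have hne : ¬ K' ≤ I := by
      intro hle'
      apply hK'
      have : K' ≤ K ⊓ I := le_inf hle hle'
      rw [hKI] at this
      exact le_bot_iff.mp this
    have htop : I ⊔ K' = ⊤ := by
      rcases lt_or_eq_of_le (le_sup_left : I ≤ I ⊔ K') with hlt' | heq
      · exact hI.2 _ hlt'
      · exact absurd (le_sup_right.trans heq.symm.le) hne
    -- every k ∈ K lies in K'
    have : K ≤ K' := by
      intro k hk
      have hk' : k ∈ I ⊔ K' := htop ▸ Submodule.mem_top
      rcases Submodule.mem_sup.mp hk' with ⟨i, hi, k', hk2, rfl⟩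
      have : i ∈ K ⊓ I := ⟨by
        have : (i + k') - k' ∈ K := K.sub_mem hk (hle hk2)
        simpa using this, hi⟩
      rw [hKI] at this
      simp only [Submodule.mem_bot] at this
      simpa [this] using hk2
    exact absurd this hlt.not_ge
  -- K ≤ Soc ≤ J ≤ I
  have hsoc : K ≤ rightSocle R := le_sSup hatom
  have hJI : jacobsonRight R ⊆ (I : Set R) := by
    intro x hx
    exact hx (I : Set R) ⟨I, hI, rfl⟩
  have hKIle : K ≤ I := fun x hx => hJI (h (hsoc hx))
  have : K = ⊥ := by
    rw [← hKI]; exact le_inf le_rfl hKIle |>.antisymm inf_le_left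
  exact hK this

lemma zhou_eq_jacobson (R : Type*) [Ring R]
    (h : (rightSocle R : Set R) ⊆ jacobsonRight R) :
    zhouRadical R = jacobsonRight R := by
  unfold zhouRadical jacobsonRight
  apply congrArg Set.sInter
  ext S
  constructor
  · rintro ⟨I, hI, -, rfl⟩; exact ⟨I, hI, rfl⟩
  · rintro ⟨I, hI, rfl⟩; exact ⟨I, hI, essential_of_coatom R h I hI, rfl⟩

/-- If `Soc(R_R) ⊆ J(R)`, then `R` is δ-reversible iff it is J-reversible. -/
theorem deltaReversible_iff_jReversible_of_socle_le_jacobson (R : Type*) [Ring R]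
    (h : (rightSocle R : Set R) ⊆ jacobsonRight R) :
    IsDeltaReversible R ↔ IsJReversible R := by
  unfold IsDeltaReversible IsJReversible
  rw [zhou_eq_jacobson R h]
end

section
/- Let R be a δ-reversible ring in which every idempotent lifts modulo δ(R), i.e., for every f ∈ R with f² − f ∈ δ(R) there exists e ∈ R with e² = e and e − f ∈ δ(R). Then the quotient R/δ(R) is abelian; equivalently, for every f ∈ R with f² − f ∈ δ(R) and every x ∈ R, one has fx − xf ∈ δ(R). -/
section Aux
variable {R : Type*} [Ring R]

lemma mem_zhou_iff {a : R} :
    a ∈ zhouRadical R ↔ ∀ I : Submodule Rᵐᵒᵖ R, IsCoatom I → IsEssentialRightIdeal R I →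
      a ∈ I := by
  constructor
  · intro h I hc he
    exact h (I : Set R) ⟨I, hc, he, rfl⟩
  · intro h S hS
    obtain ⟨I, hc, he, rfl⟩ := hS
    exact h I hc he

lemma zhou_sub {a b : R} (ha : a ∈ zhouRadical R) (hb : b ∈ zhouRadical R) :
    a - b ∈ zhouRadical R := by
  rw [mem_zhou_iff] at *
  intro I hc he
  exact I.sub_mem (ha I hc he) (hb I hc he)

lemma zhou_add {a b : R} (ha : a ∈ zhouRadical R) (hb : b ∈ zhouRadical R) :
    a + b ∈ zhouRadical R := by
  rw [mem_zhou_iff] at *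
  intro I hc he
  exact I.add_mem (ha I hc he) (hb I hc he)

lemma zhou_neg {a : R} (ha : a ∈ zhouRadical R) : -a ∈ zhouRadical R := by
  rw [mem_zhou_iff] at *
  intro I hc he
  exact I.neg_mem (ha I hc he)

lemma zhou_mul_right {a : R} (ha : a ∈ zhouRadical R) (x : R) : a * x ∈ zhouRadical R := by
  rw [mem_zhou_iff] at *
  intro I hc he
  simpa using I.smul_mem (MulOpposite.op x) (ha I hc he)

/-- Left multiplication by `x` as an `Rᵐᵒᵖ`-linear (i.e. right-`R`-linear) map. -/
def lmulOp (x : R) : R →ₗ[Rᵐᵒᵖ] R where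
  toFun r := x * r
  map_add' := mul_add x
  map_smul' c r := by simp [MulOpposite.smul_eq_mul_unop, mul_assoc]

@[simp] lemma lmulOp_apply (x r : R) : lmulOp x r = x * r := rfl

lemma zhou_mul_left {a : R} (ha : a ∈ zhouRadical R) (x : R) : x * a ∈ zhouRadical R := by
  rw [mem_zhou_iff] at ha ⊢
  intro I hc he
  by_cases hx : x ∈ I
  · simpa using I.smul_mem (MulOpposite.op a) hx
  · -- `(I : x)` is an essential maximal right ideal
    set K := I.comap (lmulOp x) with hKdef
    have hmemK : ∀ r : R, r ∈ K ↔ x * r ∈ I := fun r => Iff.rfl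
    have hK : a ∈ K := by
      apply ha
      · constructor
        · intro h
          exact hx (by simpa using (hmemK 1).mp (h ▸ Submodule.mem_top (x := (1 : R))))
        · intro J hJ
          obtain ⟨j, hjJ, hjK⟩ := SetLike.exists_of_lt hJ
          have hxj : x * j ∉ I := hjK
          have hsup : I ⊔ Submodule.span Rᵐᵒᵖ {x * j} = ⊤ := by
            apply hc.2
            refine lt_of_le_of_ne le_sup_left ?_
            intro h
            exact hxj (h ▸ Submodule.mem_sup_right (Submodule.mem_span_singleton_self (x * j)))
          rw [eq_top_iff]
          intro y _
          have hy : x * y ∈ I ⊔ Submodule.span Rᵐᵒᵖ {x * j} := hsup ▸ Submodule.mem_top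
          obtain ⟨m, hm, n, hn, hmn⟩ := Submodule.mem_sup.mp hy
          obtain ⟨c, rfl⟩ := Submodule.mem_span_singleton.mp hn
          have hc2 : x * (c • j) = c • (x * j) := by
            simp [MulOpposite.smul_eq_mul_unop, mul_assoc]
          have hyk : y - c • j ∈ K := by
            rw [hmemK, mul_sub, hc2, ← hmn]
            simpa using hm
          have := J.add_mem (hJ.le hyk) (J.smul_mem c hjJ)
          simpa using this
      · -- essential
        intro L hL
        have hmapL : Submodule.map (lmulOp x) L = ⊥ := by
          apply he
          rw [eq_bot_iff]
          rintro m ⟨⟨l, hl, rfl⟩, hmI⟩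
          have : l ∈ L ⊓ K := ⟨hl, (hmemK l).mpr hmI⟩
          rw [hL, Submodule.mem_bot] at this
          simp [this]
        rw [eq_bot_iff]
        intro l hl
        have hxl : x * l = 0 := by
          have : lmulOp x l ∈ Submodule.map (lmulOp x) L := ⟨l, hl, rfl⟩
          rw [hmapL] at this
          simpa using this
        have : l ∈ L ⊓ K := ⟨hl, (hmemK l).mpr (by rw [hxl]; exact I.zero_mem)⟩
        rw [hL] at this
        exact this
    exact hK

end Aux

/-- If `R` is δ-reversible and idempotents lift modulo `δ(R)`, then `R/δ(R)` is abelian: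
every element that is idempotent modulo `δ(R)` commutes with everything modulo `δ(R)`. -/
theorem quotient_abelian_of_deltaReversible_of_lift (R : Type*) [Ring R]
    (hrev : IsDeltaReversible R)
    (hlift : ∀ f : R, f * f - f ∈ zhouRadical R →
      ∃ e : R, e * e = e ∧ e - f ∈ zhouRadical R) :
    ∀ f x : R, f * f - f ∈ zhouRadical R → f * x - x * f ∈ zhouRadical R := by
  have hidem : ∀ e x : R, e * e = e → e * x - x * e ∈ zhouRadical R := by
    intro e x he
    have h1 : (1 - e) * (e * x) = 0 := by
      have : (1 - e) * (e * x) = (e - e * e) * x := by noncomm_ring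
      rw [this, he]; simp
    have h2 : e * ((1 - e) * x) = 0 := by
      have : e * ((1 - e) * x) = (e - e * e) * x := by noncomm_ring
      rw [this, he]; simp
    have r1 := hrev _ _ h1
    have r2 := hrev _ _ h2
    have : e * x - x * e = (e * x) * (1 - e) - ((1 - e) * x) * e := by noncomm_ring
    rw [this]
    exact zhou_sub r1 r2
  intro f x hf
  obtain ⟨e, he, hef⟩ := hlift f hf
  have key : f * x - x * f =
      (-(e - f)) * x + ((e * x - x * e) + x * (e - f)) := by noncomm_ring
  rw [key]
  exact zhou_add (zhou_mul_right (zhou_neg hef) x)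
    (zhou_add (hidem e x he) (zhou_mul_left hef x))
end

section
/- Let R be a δ-reversible ring. Then for every idempotent e ∈ R (e² = e), one has eR(1−e) + (1−e)Re ⊆ δ(R); that is, for all x, y ∈ R, ex(1−e) + (1−e)ye ∈ δ(R). -/
/-- In a δ-reversible ring, `eR(1-e) + (1-e)Re ⊆ δ(R)` for every idempotent `e`. -/
theorem corner_subset_zhouRadical_of_deltaReversible (R : Type*) [Ring R]
    (hrev : IsDeltaReversible R) (e : R) (he : e * e = e) :
    ∀ x y : R, e * x * (1 - e) + (1 - e) * y * e ∈ zhouRadical R := by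
  intro x y
  have h1 : e * (x * (1 - e)) ∈ zhouRadical R := by
    apply hrev
    rw [mul_assoc, sub_mul, one_mul, he, sub_self, mul_zero]
  have h2 : (1 - e) * (y * e) ∈ zhouRadical R := by
    apply hrev
    rw [mul_assoc, mul_sub, mul_one, he, sub_self, mul_zero]
  intro S hS
  obtain ⟨I, hc, hess, rfl⟩ := hS
  have := I.add_mem (h1 _ ⟨I, hc, hess, rfl⟩) (h2 _ ⟨I, hc, hess, rfl⟩)
  simpa [mul_assoc] using this
end

section
/- For a ring R, the following are equivalent: (1) R is δ-reversible; (2) for every r ∈ R, r² = 0 implies r ∈ δ(R); (3) for every r ∈ R, if r² = 0 then rm − mr ∈ δ(R) for all m ∈ R. -/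
open MulOpposite

lemma mem_zhouRadical_iff {R : Type*} [Ring R] {x : R} :
    x ∈ zhouRadical R ↔
      ∀ I : Submodule Rᵐᵒᵖ R, IsCoatom I → IsEssentialRightIdeal R I → x ∈ I := by
  constructor
  · intro h I hc he
    exact h (↑I) ⟨I, hc, he, rfl⟩
  · rintro h S ⟨I, hc, he, rfl⟩
    exact h I hc he

/-- left multiplication as an `Rᵐᵒᵖ`-linear map. -/
def lmulLeft {R : Type*} [Ring R] (s : R) : R →ₗ[Rᵐᵒᵖ] R where
  toFun x := s * x
  map_add' x y := mul_add s x y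
  map_smul' r x := by
    simp only [RingHom.id_apply]
    show s * (x * r.unop) = (s * x) * r.unop
    rw [mul_assoc]

lemma zhou_smul_left {R : Type*} [Ring R] {x : R} (hx : x ∈ zhouRadical R) (s : R) :
    s * x ∈ zhouRadical R := by
  rw [mem_zhouRadical_iff] at hx ⊢
  intro I hc he
  set L : Submodule Rᵐᵒᵖ R := Submodule.comap (lmulLeft s) I with hL
  by_cases hLtop : L = ⊤
  · have : x ∈ L := hLtop ▸ Submodule.mem_top
    exact this
  · -- L is essential
    have hess : IsEssentialRightIdeal R L := by
      intro K hK
      have h1 : Submodule.map (lmulLeft s) K ⊓ I = ⊥ := by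
        rw [eq_bot_iff]
        rintro y ⟨⟨k, hk, rfl⟩, hyI⟩
        have : k ∈ K ⊓ L := ⟨hk, hyI⟩
        rw [hK] at this
        simp only [Submodule.mem_bot] at this
        simp [this, lmulLeft]
      have h2 := he _ h1
      rw [eq_bot_iff]
      intro k hk
      have : lmulLeft s k ∈ Submodule.map (lmulLeft s) K := ⟨k, hk, rfl⟩
      rw [h2] at this
      simp only [Submodule.mem_bot] at this
      have hkL : k ∈ L := by
        show lmulLeft s k ∈ I
        rw [this]; exact I.zero_mem
      have : k ∈ K ⊓ L := ⟨hk, hkL⟩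
      rw [hK] at this
      exact this
    -- L is a coatom
    have hco : IsCoatom L := by
      refine ⟨hLtop, fun J hJ => ?_⟩
      obtain ⟨y, hyJ, hyL⟩ : ∃ y ∈ J, y ∉ L := by
        by_contra hcon
        push_neg at hcon
        exact (lt_irrefl L) (lt_of_lt_of_le hJ hcon)
      have hsy : s * y ∉ I := hyL
      have htop : I ⊔ Submodule.span Rᵐᵒᵖ {s * y} = ⊤ := by
        apply hc.2
        rw [left_lt_sup]
        intro hle
        exact hsy (hle (Submodule.mem_span_singleton_self _))
      rw [eq_top_iff]
      intro z _
      have : s * z ∈ (⊤ : Submodule Rᵐᵒᵖ R) := Submodule.mem_top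
      rw [← htop] at this
      obtain ⟨i, hi, w, hw, hiw⟩ := Submodule.mem_sup.mp this
      obtain ⟨a, rfl⟩ := Submodule.mem_span_singleton.mp hw
      -- a • (s*y) = (s*y) * a.unop
      have hz : z - y * a.unop ∈ L := by
        show s * (z - y * a.unop) ∈ I
        have : s * (z - y * a.unop) = i := by
          have : a • (s * y) = s * (y * a.unop) := by
            show (s * y) * a.unop = s * (y * a.unop)
            rw [mul_assoc]
          rw [mul_sub, ← this, ← hiw]; abel
        rw [this]; exact hi
      have h1 : z - y * a.unop ∈ J := le_of_lt hJ hz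
      have h2 : y * a.unop ∈ J := by
        have := J.smul_mem a hyJ
        exact this
      have := J.add_mem h1 h2
      simpa using this
    have hxL := hx L hco hess
    exact hxL

lemma zhou_smul_right {R : Type*} [Ring R] {x : R} (hx : x ∈ zhouRadical R) (s : R) :
    x * s ∈ zhouRadical R := by
  rw [mem_zhouRadical_iff] at hx ⊢
  intro I hc he
  exact I.smul_mem (op s) (hx I hc he)

lemma zhou_sub_s5 {R : Type*} [Ring R] {x y : R} (hx : x ∈ zhouRadical R)
    (hy : y ∈ zhouRadical R) : x - y ∈ zhouRadical R := by
  rw [mem_zhouRadical_iff] at hx hy ⊢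
  intro I hc he
  exact I.sub_mem (hx I hc he) (hy I hc he)

lemma exists_decomp {R : Type*} [Ring R] {I : Submodule Rᵐᵒᵖ R} (hc : IsCoatom I)
    {r : R} (hr : r ∉ I) : ∃ m ∈ I, ∃ s : R, (1 : R) = m + r * s := by
  have htop : I ⊔ Submodule.span Rᵐᵒᵖ {r} = ⊤ := by
    apply hc.2
    rw [left_lt_sup]
    intro hle
    exact hr (hle (Submodule.mem_span_singleton_self _))
  have h1 : (1 : R) ∈ I ⊔ Submodule.span Rᵐᵒᵖ {r} := htop ▸ Submodule.mem_top
  obtain ⟨m, hm, w, hw, hmw⟩ := Submodule.mem_sup.mp h1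
  obtain ⟨a, rfl⟩ := Submodule.mem_span_singleton.mp hw
  exact ⟨m, hm, a.unop, by rw [← hmw]; rfl⟩


/-- `R` is δ-reversible iff every square-zero element lies in `δ(R)`, iff every square-zero
element commutes with all elements modulo `δ(R)`. -/
theorem deltaReversible_tfae (R : Type*) [Ring R] :
    (IsDeltaReversible R ↔ ∀ r : R, r * r = 0 → r ∈ zhouRadical R) ∧
    ((∀ r : R, r * r = 0 → r ∈ zhouRadical R) ↔
      ∀ r : R, r * r = 0 → ∀ m : R, r * m - m * r ∈ zhouRadical R) := by
  constructor
  · constructor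
    · intro h r hr
      rw [mem_zhouRadical_iff]
      intro I hc he
      by_cases hrI : r ∈ I
      · exact hrI
      obtain ⟨m, hm, s, hms⟩ := exists_decomp hc hrI
      have key : (r * s) * r ∈ zhouRadical R := by
        apply h r (r * s)
        rw [← mul_assoc, hr, zero_mul]
      have hmr : m * r ∈ I := I.smul_mem (op r) hm
      have : r = m * r + (r * s) * r := by
        calc r = 1 * r := (one_mul r).symm
        _ = (m + r * s) * r := by rw [← hms]
        _ = m * r + (r * s) * r := by noncomm_ring
      rw [this]
      exact I.add_mem hmr (mem_zhouRadical_iff.mp key I hc he)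
    · intro h a b hab
      apply h
      calc b * a * (b * a) = b * (a * b) * a := by noncomm_ring
      _ = 0 := by rw [hab, mul_zero, zero_mul]
  · constructor
    · intro h r hr m
      have hrδ := h r hr
      exact zhou_sub_s5 (zhou_smul_right hrδ m) (zhou_smul_left hrδ m)
    · intro h r hr
      rw [mem_zhouRadical_iff]
      intro I hc he
      by_cases hrI : r ∈ I
      · exact hrI
      obtain ⟨m, hm, s, hms⟩ := exists_decomp hc hrI
      have hcomm : r * s - s * r ∈ zhouRadical R := h r hr s
      have h1 : (r * s - s * r) * r ∈ I :=
        I.smul_mem (op r) (mem_zhouRadical_iff.mp hcomm I hc he)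
      have h2 : (r * s) * r ∈ I := by
        have : (r * s) * r = (r * s - s * r) * r + s * (r * r) := by noncomm_ring
        rw [this, hr, mul_zero, add_zero]
        exact h1
      have hmr : m * r ∈ I := I.smul_mem (op r) hm
      have : r = m * r + (r * s) * r := by
        calc r = 1 * r := (one_mul r).symm
        _ = (m + r * s) * r := by rw [← hms]
        _ = m * r + (r * s) * r := by noncomm_ring
      rw [this]
      exact I.add_mem hmr h2
end

section
/- A ring R is δ-reversible if and only if for every idempotent e ∈ R the corner ring eRe (a ring with identity element e) is δ-reversible. -/
section Corner

variable {R : Type*} [Ring R]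

/-- The corner ring `eRe = {exe : x ∈ R}` associated with an idempotent `e`,
realized as the set of elements fixed by `x ↦ e * x * e`. -/
def CornerRing (e : R) (_he : e * e = e) : Type _ := {x : R // e * x * e = x}

namespace CornerRing

variable {e : R} {he : e * e = e}

theorem absorb_left (he : e * e = e) {x : R} (hx : e * x * e = x) : e * x = x := by
  conv_lhs => rw [← hx]
  rw [← mul_assoc, ← mul_assoc, he]
  exact hx

theorem absorb_right (he : e * e = e) {x : R} (hx : e * x * e = x) : x * e = x := by
  conv_lhs => rw [← hx]
  rw [mul_assoc, mul_assoc, he, ← mul_assoc]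
  exact hx

instance : Add (CornerRing e he) :=
  ⟨fun x y => ⟨x.1 + y.1, by rw [mul_add, add_mul, x.2, y.2]⟩⟩

instance : Zero (CornerRing e he) := ⟨⟨0, by simp⟩⟩

instance : Neg (CornerRing e he) :=
  ⟨fun x => ⟨-x.1, by rw [mul_neg, neg_mul, x.2]⟩⟩

instance : Sub (CornerRing e he) :=
  ⟨fun x y => ⟨x.1 - y.1, by rw [mul_sub, sub_mul, x.2, y.2]⟩⟩

instance : SMul ℕ (CornerRing e he) :=
  ⟨fun n x => ⟨n • x.1, by rw [mul_smul_comm, smul_mul_assoc, x.2]⟩⟩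

instance : SMul ℤ (CornerRing e he) :=
  ⟨fun n x => ⟨n • x.1, by rw [mul_smul_comm, smul_mul_assoc, x.2]⟩⟩

instance : AddCommGroup (CornerRing e he) :=
  Function.Injective.addCommGroup (fun x => x.1) Subtype.val_injective
    rfl (fun _ _ => rfl) (fun _ => rfl) (fun _ _ => rfl) (fun _ _ => rfl) (fun _ _ => rfl)

instance : Mul (CornerRing e he) :=
  ⟨fun x y => ⟨x.1 * y.1, by
    have h1 : e * x.1 = x.1 := absorb_left he x.2
    have h2 : y.1 * e = y.1 := absorb_right he y.2
    rw [← mul_assoc, h1, mul_assoc, h2]⟩⟩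

instance : One (CornerRing e he) := ⟨⟨e, by rw [he, he]⟩⟩

/-- The corner ring `eRe` is a ring with identity element `e`. -/
instance : Ring (CornerRing e he) :=
  { (inferInstance : AddCommGroup (CornerRing e he)) with
    mul := (· * ·)
    one := 1
    mul_assoc := fun x y z => Subtype.ext (mul_assoc x.1 y.1 z.1)
    one_mul := fun x => Subtype.ext (absorb_left he x.2)
    mul_one := fun x => Subtype.ext (absorb_right he x.2)
    left_distrib := fun x y z => Subtype.ext (left_distrib x.1 y.1 z.1)
    right_distrib := fun x y z => Subtype.ext (right_distrib x.1 y.1 z.1)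
    zero_mul := fun x => Subtype.ext (zero_mul x.1)
    mul_zero := fun x => Subtype.ext (mul_zero x.1) }

end CornerRing

end Corner


section Aux

lemma eq_top_of_one_mem' {A : Type*} [Ring A] {I : Submodule Aᵐᵒᵖ A} (h : (1:A) ∈ I) :
    I = ⊤ := by
  ext x
  simp only [Submodule.mem_top, iff_true]
  have hx : (1:A) * x ∈ I := I.smul_mem (MulOpposite.op x) h
  rwa [one_mul] at hx

lemma exists_coatom_ge' {A : Type*} [Ring A] (I : Submodule Aᵐᵒᵖ A) (hI : (1:A) ∉ I) :
    ∃ L : Submodule Aᵐᵒᵖ A, IsCoatom L ∧ I ≤ L := by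
  have hch : ∀ c ⊆ {K : Submodule Aᵐᵒᵖ A | I ≤ K ∧ (1:A) ∉ K},
      IsChain (· ≤ ·) c → ∃ ub ∈ {K : Submodule Aᵐᵒᵖ A | I ≤ K ∧ (1:A) ∉ K},
        ∀ z ∈ c, z ≤ ub := by
    intro c hc hchain
    rcases Set.eq_empty_or_nonempty c with rfl | hne
    · refine ⟨I, ⟨le_refl I, hI⟩, ?_⟩
      intro z hz
      exact absurd hz (Set.notMem_empty z)
    · refine ⟨sSup c, ⟨?_, ?_⟩, fun z hz => le_sSup hz⟩
      · obtain ⟨K, hK⟩ := hne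
        exact le_trans (hc hK).1 (le_sSup hK)
      · intro h1
        rw [Submodule.mem_sSup_of_directed hne hchain.directedOn] at h1
        obtain ⟨K, hK, h1K⟩ := h1
        exact (hc hK).2 h1K
  obtain ⟨L, hL⟩ := zorn_le₀ {K : Submodule Aᵐᵒᵖ A | I ≤ K ∧ (1:A) ∉ K} hch
  refine ⟨L, ⟨?_, ?_⟩, hL.prop.1⟩
  · intro h
    exact hL.prop.2 (h ▸ Submodule.mem_top)
  · intro J hJ
    by_contra hne
    have h1 : (1:A) ∉ J := fun h => hne (eq_top_of_one_mem' h)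
    have hle : J ≤ L := hL.2 ⟨le_trans hL.prop.1 hJ.le, h1⟩ hJ.le
    exact absurd (lt_of_lt_of_le hJ hle) (lt_irrefl L)

lemma exists_complement' {A : Type*} [Ring A] (I : Submodule Aᵐᵒᵖ A) :
    ∃ C : Submodule Aᵐᵒᵖ A, Maximal (fun K => K ⊓ I = ⊥) C := by
  apply zorn_le₀
  intro c hc hchain
  rcases Set.eq_empty_or_nonempty c with rfl | hne
  · refine ⟨⊥, bot_inf_eq I, ?_⟩
    intro z hz
    exact absurd hz (Set.notMem_empty z)
  · refine ⟨sSup c, ?_, fun z hz => le_sSup hz⟩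
    show sSup c ⊓ I = ⊥
    rw [eq_bot_iff]
    intro x hx
    obtain ⟨hx1, hx2⟩ := Submodule.mem_inf.mp hx
    rw [Submodule.mem_sSup_of_directed hne hchain.directedOn] at hx1
    obtain ⟨K, hK, hxK⟩ := hx1
    have hmem : x ∈ K ⊓ I := Submodule.mem_inf.mpr ⟨hxK, hx2⟩
    rw [hc hK] at hmem
    exact hmem

/-- Pull back a right ideal along a ring isomorphism. -/
def pullbackIdeal {A B : Type*} [Ring A] [Ring B] (f : B ≃+* A) (I : Submodule Aᵐᵒᵖ A) :
    Submodule Bᵐᵒᵖ B where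
  carrier := {x | f x ∈ I}
  add_mem' := fun hx hy => by
    show f (_ + _) ∈ I
    rw [map_add]; exact I.add_mem hx hy
  zero_mem' := by
    show f 0 ∈ I
    rw [map_zero]; exact I.zero_mem
  smul_mem' := fun r x hx => by
    show f (x * r.unop) ∈ I
    rw [map_mul]
    exact I.smul_mem (MulOpposite.op (f r.unop)) hx

lemma mem_pullbackIdeal {A B : Type*} [Ring A] [Ring B] (f : B ≃+* A)
    (I : Submodule Aᵐᵒᵖ A) (x : B) : x ∈ pullbackIdeal f I ↔ f x ∈ I := Iff.rfl

lemma isDeltaReversible_of_ringEquiv {A B : Type*} [Ring A] [Ring B] (f : A ≃+* B)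
    (hA : IsDeltaReversible A) : IsDeltaReversible B := by
  intro a b hab
  have h0 : (f.symm a) * (f.symm b) = 0 := by
    rw [← map_mul, hab, map_zero]
  have h := hA _ _ h0
  refine Set.mem_sInter.mpr ?_
  rintro S ⟨I, hcoI, hessI, rfl⟩
  set I₀ : Submodule Aᵐᵒᵖ A := pullbackIdeal f I with hI₀def
  have hcoI₀ : IsCoatom I₀ := by
    constructor
    · intro htop
      have h1 : (1:A) ∈ I₀ := htop ▸ Submodule.mem_top
      have : (1:B) ∈ I := by
        have := (mem_pullbackIdeal f I 1).mp h1
        rwa [map_one] at this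
      exact hcoI.1 (eq_top_of_one_mem' this)
    · intro J hJ
      set J' : Submodule Bᵐᵒᵖ B := pullbackIdeal f.symm J with hJ'def
      have hIJ' : I < J' := by
        constructor
        · intro y hy
          refine (mem_pullbackIdeal _ _ _).mpr ?_
          have : f (f.symm y) ∈ I := by rwa [RingEquiv.apply_symm_apply]
          exact hJ.le ((mem_pullbackIdeal f I _).mpr this)
        · intro hle
          obtain ⟨x, hxJ, hxI₀⟩ := SetLike.exists_of_lt hJ
          have : f x ∈ J' := by
            refine (mem_pullbackIdeal _ _ _).mpr ?_
            rwa [RingEquiv.symm_apply_apply]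
          exact hxI₀ ((mem_pullbackIdeal f I _).mpr (hle this))
      have hJ'top : J' = ⊤ := hcoI.2 J' hIJ'
      rw [eq_top_iff]
      intro x _
      have : f x ∈ J' := hJ'top ▸ Submodule.mem_top
      have := (mem_pullbackIdeal f.symm J (f x)).mp this
      rwa [RingEquiv.symm_apply_apply] at this
  have hessI₀ : IsEssentialRightIdeal A I₀ := by
    intro K hK
    set K' : Submodule Bᵐᵒᵖ B := pullbackIdeal f.symm K with hK'def
    have hK' : K' ⊓ I = ⊥ := by
      rw [eq_bot_iff]
      intro y hy
      obtain ⟨hy1, hy2⟩ := Submodule.mem_inf.mp hy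
      have hyK : f.symm y ∈ K := (mem_pullbackIdeal _ _ _).mp hy1
      have hyI₀ : f.symm y ∈ I₀ := by
        refine (mem_pullbackIdeal _ _ _).mpr ?_
        rwa [RingEquiv.apply_symm_apply]
      have : f.symm y ∈ K ⊓ I₀ := Submodule.mem_inf.mpr ⟨hyK, hyI₀⟩
      rw [hK] at this
      have h0 : f.symm y = 0 := by simpa using this
      have : y = 0 := by
        have := congrArg f h0
        rwa [RingEquiv.apply_symm_apply, map_zero] at this
      simp [this]
    have hbot : K' = ⊥ := hessI K' hK'
    rw [eq_bot_iff]
    intro x hx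
    have : f x ∈ K' := by
      refine (mem_pullbackIdeal _ _ _).mpr ?_
      rwa [RingEquiv.symm_apply_apply]
    rw [hbot] at this
    have h0 : f x = 0 := by simpa using this
    have : x = 0 := by
      have := congrArg f.symm h0
      rwa [RingEquiv.symm_apply_apply, map_zero] at this
    simp [this]
  have hmem : f.symm b * f.symm a ∈ I₀ :=
    Set.mem_sInter.mp h _ ⟨I₀, hcoI₀, hessI₀, rfl⟩
  have : f (f.symm b * f.symm a) ∈ I := (mem_pullbackIdeal _ _ _).mp hmem
  rwa [map_mul, RingEquiv.apply_symm_apply, RingEquiv.apply_symm_apply] at this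

/-- The corner ring at the idempotent `1` is isomorphic to `R`. -/
def cornerOneEquiv (R : Type*) [Ring R] (he : (1:R) * 1 = 1) : CornerRing (1:R) he ≃+* R where
  toFun x := x.1
  invFun x := ⟨x, by rw [one_mul, mul_one]⟩
  left_inv x := Subtype.ext rfl
  right_inv x := rfl
  map_mul' x y := rfl
  map_add' x y := rfl

lemma sandwich {R : Type*} [Ring R] {e : R} (he : e * e = e) (s : R) :
    e * (e * s * e) * e = e * s * e := by
  rw [← mul_assoc, ← mul_assoc, he, mul_assoc, he]

end Aux

/-- `R` is δ-reversible iff the corner ring `eRe` is δ-reversible for every idempotent `e`. -/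
theorem deltaReversible_iff_corner (R : Type*) [Ring R] :
    IsDeltaReversible R ↔
      ∀ (e : R) (he : e * e = e), IsDeltaReversible (CornerRing e he) := by
  constructor
  · intro hR e he a b hab
    have hab' : a.1 * b.1 = 0 := congrArg Subtype.val hab
    have hba : b.1 * a.1 ∈ zhouRadical R := hR a.1 b.1 hab'
    refine Set.mem_sInter.mpr ?_
    rintro S ⟨M, hM, hMess, rfl⟩
    -- the span of the image of M in R
    set A : Submodule Rᵐᵒᵖ R :=
      Submodule.span Rᵐᵒᵖ ((fun m : CornerRing e he => m.1) '' (M : Set (CornerRing e he))) with hAdef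
    set Bs : Submodule Rᵐᵒᵖ R := Submodule.span Rᵐᵒᵖ {1 - e} with hBsdef
    set M' : Submodule Rᵐᵒᵖ R := A ⊔ Bs with hM'def
    have habsl : ∀ m : CornerRing e he, e * m.1 = m.1 :=
      fun m => CornerRing.absorb_left he m.2
    have habsr : ∀ m : CornerRing e he, m.1 * e = m.1 :=
      fun m => CornerRing.absorb_right he m.2
    -- every element of A gets mapped into M under x ↦ e x s e
    have hA : ∀ x ∈ A, ∀ s : R, ∃ m : CornerRing e he, m ∈ M ∧ m.1 = e * (x * s) * e := by
      intro x hx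
      refine Submodule.span_induction ?_ ?_ ?_ ?_ hx
      · rintro v ⟨m, hm, rfl⟩ s
        have hcmem := M.smul_mem
          (MulOpposite.op (⟨e * s * e, sandwich he s⟩ : CornerRing e he)) hm
        refine ⟨_, hcmem, ?_⟩
        show m.1 * (e * s * e) = e * (m.1 * s) * e
        simp only [← mul_assoc]
        rw [habsr m, habsl m]
      · intro s
        exact ⟨0, M.zero_mem, by show (0:R) = e * (0 * s) * e; simp⟩
      · rintro x y hx hy px py s
        obtain ⟨m, hm, hmv⟩ := px s
        obtain ⟨m', hm', hmv'⟩ := py s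
        refine ⟨m + m', M.add_mem hm hm', ?_⟩
        show m.1 + m'.1 = e * ((x + y) * s) * e
        rw [hmv, hmv']
        noncomm_ring
      · rintro r x hx px s
        obtain ⟨m, hm, hmv⟩ := px (r.unop * s)
        refine ⟨m, hm, ?_⟩
        show m.1 = e * (x * r.unop * s) * e
        rw [hmv, mul_assoc x r.unop s]
    have hBs : ∀ x ∈ Bs, e * x * e = 0 := by
      intro x hx
      obtain ⟨r, hr⟩ := Submodule.mem_span_singleton.mp hx
      rw [← hr]
      show e * ((1 - e) * r.unop) * e = 0
      have h0 : e * (1 - e) = 0 := by rw [mul_sub, mul_one, he, sub_self]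
      rw [← mul_assoc, h0, zero_mul, zero_mul]
    have hM'e : ∀ x ∈ M', ∃ m : CornerRing e he, m ∈ M ∧ m.1 = e * x * e := by
      intro x hx
      obtain ⟨y, hy, z, hz, rfl⟩ := Submodule.mem_sup.mp hx
      obtain ⟨m, hm, hmv⟩ := hA y hy 1
      refine ⟨m, hm, ?_⟩
      rw [hmv, mul_one, mul_add, add_mul, hBs z hz, add_zero]
    have hvalM : ∀ m : CornerRing e he, m ∈ M → m.1 ∈ M' := by
      intro m hm
      exact le_sup_left (α := Submodule Rᵐᵒᵖ R)
        (Submodule.subset_span ⟨m, hm, rfl⟩)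
    have h1e : (1 : R) - e ∈ M' :=
      le_sup_right (α := Submodule Rᵐᵒᵖ R) (Submodule.mem_span_singleton_self _)
    have heM' : e ∉ M' := by
      intro h
      obtain ⟨m, hm, hmv⟩ := hM'e e h
      have hme : m.1 = e := by rw [hmv, he, he]
      have h1M : (1 : CornerRing e he) ∈ M := by
        have : m = 1 := Subtype.ext hme
        rwa [this] at hm
      exact hM.1 (eq_top_of_one_mem' h1M)
    -- Lemma A : every right ideal meeting M' trivially is killed by e on the right
    have hKe : ∀ K : Submodule Rᵐᵒᵖ R, K ⊓ M' = ⊥ → ∀ k ∈ K, k * e = 0 := by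
      intro K hK
      have sub1 : ∀ k ∈ K, e * k = 0 → k = 0 := by
        intro k hk h0
        have h1 : (1 - e) * k ∈ M' := M'.smul_mem (MulOpposite.op k) h1e
        rw [sub_mul, one_mul, h0, sub_zero] at h1
        have : k ∈ K ⊓ M' := Submodule.mem_inf.mpr ⟨hk, h1⟩
        rw [hK] at this
        simpa using this
      have sub2 : ∀ k ∈ K, e * k * e = 0 := by
        intro k hk
        set P : Submodule (CornerRing e he)ᵐᵒᵖ (CornerRing e he) :=
          { carrier := {y | ∃ k' ∈ K, y.1 = e * k' * e}
            add_mem' := by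
              rintro y y' ⟨k1, hk1, hy1⟩ ⟨k2, hk2, hy2⟩
              refine ⟨k1 + k2, K.add_mem hk1 hk2, ?_⟩
              show y.1 + y'.1 = e * (k1 + k2) * e
              rw [hy1, hy2]
              noncomm_ring
            zero_mem' := ⟨0, K.zero_mem, by show (0:R) = e * 0 * e; simp⟩
            smul_mem' := by
              rintro c y ⟨k1, hk1, hy1⟩
              refine ⟨k1 * c.unop.1, K.smul_mem (MulOpposite.op c.unop.1) hk1, ?_⟩
              show y.1 * c.unop.1 = e * (k1 * c.unop.1) * e
              rw [hy1]
              simp only [← mul_assoc]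
              rw [mul_assoc (e * k1) e c.unop.1, habsl c.unop,
                mul_assoc (e * k1) c.unop.1 e, habsr c.unop] } with hPdef
        have hPM : P ⊓ M = ⊥ := by
          rw [eq_bot_iff]
          intro y hy
          obtain ⟨hy1, hy2⟩ := Submodule.mem_inf.mp hy
          obtain ⟨k1, hk1, hyv⟩ := hy1
          have hke : k1 * e ∈ K := K.smul_mem (MulOpposite.op e) hk1
          have hkeM' : k1 * e ∈ M' := by
            have h1 : (1 - e) * (k1 * e) ∈ M' :=
              M'.smul_mem (MulOpposite.op (k1 * e)) h1e
            have h2 : y.1 ∈ M' := hvalM y hy2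
            have h3 : k1 * e = y.1 + (1 - e) * (k1 * e) := by
              rw [hyv]; noncomm_ring
            rw [h3]
            exact M'.add_mem h2 h1
          have : k1 * e ∈ K ⊓ M' := Submodule.mem_inf.mpr ⟨hke, hkeM'⟩
          rw [hK] at this
          have hke0 : k1 * e = 0 := by simpa using this
          have hyv0 : y.1 = 0 := by
            rw [hyv, mul_assoc, hke0, mul_zero]
          show y ∈ (⊥ : Submodule (CornerRing e he)ᵐᵒᵖ (CornerRing e he))
          rw [Submodule.mem_bot]
          exact Subtype.ext hyv0
        have hPbot : P = ⊥ := hMess P hPM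
        have : (⟨e * k * e, sandwich he k⟩ : CornerRing e he) ∈ P := ⟨k, hk, rfl⟩
        rw [hPbot] at this
        exact congrArg Subtype.val ((Submodule.mem_bot (M := CornerRing e he) (CornerRing e he)ᵐᵒᵖ).mp this)
      intro k hk
      have hke : k * e ∈ K := K.smul_mem (MulOpposite.op e) hk
      refine sub1 (k * e) hke ?_
      rw [← mul_assoc]
      exact sub2 k hk
    obtain ⟨Cc, hCc⟩ := exists_complement' M'
    set L' : Submodule Rᵐᵒᵖ R := M' ⊔ Cc with hL'def
    have hM'L' : M' ≤ L' := le_sup_left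
    have hCcL' : Cc ≤ L' := le_sup_right
    have hL'1 : (1 : R) ∉ L' := by
      intro h1
      have he' : e ∈ L' := by
        have : (1:R) * e ∈ L' := L'.smul_mem (MulOpposite.op e) h1
        rwa [one_mul] at this
      obtain ⟨m, hm, c, hc, hmc⟩ := Submodule.mem_sup.mp he'
      have hce : c * e = 0 := hKe Cc hCc.prop c hc
      have heq : e = m * e := by
        calc e = e * e := he.symm
        _ = (m + c) * e := by rw [hmc]
        _ = m * e + c * e := add_mul m c e
        _ = m * e := by rw [hce, add_zero]
      have : e ∈ M' := by
        rw [heq]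
        exact M'.smul_mem (MulOpposite.op e) hm
      exact heM' this
    have hL'ess : IsEssentialRightIdeal R L' := by
      intro K hKL'
      have hsub : (Cc ⊔ K) ⊓ M' = ⊥ := by
        rw [eq_bot_iff]
        intro x hx
        obtain ⟨hx1, hx2⟩ := Submodule.mem_inf.mp hx
        obtain ⟨c, hc, k, hk, rfl⟩ := Submodule.mem_sup.mp hx1
        have hkL' : k ∈ L' := by
          rw [← add_sub_cancel_left c k]
          exact L'.sub_mem (hM'L' hx2) (hCcL' hc)
        have : k ∈ K ⊓ L' := Submodule.mem_inf.mpr ⟨hk, hkL'⟩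
        rw [hKL'] at this
        have hk0 : k = 0 := by simpa using this
        have hcM' : c + k ∈ Cc ⊓ M' := by
          refine Submodule.mem_inf.mpr ⟨?_, hx2⟩
          rw [hk0, add_zero]
          exact hc
        rw [hCc.prop] at hcM'
        exact hcM'
      have hle : Cc ⊔ K ≤ Cc := hCc.2 hsub le_sup_left
      have hKCc : K ≤ Cc := le_trans le_sup_right hle
      rw [eq_bot_iff]
      intro k hk
      have : k ∈ K ⊓ L' := Submodule.mem_inf.mpr ⟨hk, hCcL' (hKCc hk)⟩
      rw [hKL'] at this
      exact this
    obtain ⟨L, hLco, hL'L⟩ := exists_coatom_ge' L' hL'1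
    have hLess : IsEssentialRightIdeal R L := by
      intro K hK
      refine hL'ess K ?_
      rw [eq_bot_iff]
      exact le_trans (inf_le_inf_left K hL'L) hK.le
    have hbaL : b.1 * a.1 ∈ L :=
      Set.mem_sInter.mp hba _ ⟨L, hLco, hLess, rfl⟩
    set N : Submodule (CornerRing e he)ᵐᵒᵖ (CornerRing e he) :=
      { carrier := {y | y.1 ∈ L}
        add_mem' := fun hx hy => L.add_mem hx hy
        zero_mem' := L.zero_mem
        smul_mem' := fun c y hy => by
          show y.1 * c.unop.1 ∈ L
          exact L.smul_mem (MulOpposite.op c.unop.1) hy } with hNdef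
    have hMN : M ≤ N := by
      intro m hm
      show m.1 ∈ L
      exact hL'L (hM'L' (hvalM m hm))
    have h1L : (1 : R) ∉ L := fun h => hLco.1 (eq_top_of_one_mem' h)
    have heL : e ∉ L := by
      intro h
      have : (1 : R) ∈ L := by
        have := L.add_mem h (hL'L (hM'L' h1e))
        rwa [add_sub_cancel] at this
      exact h1L this
    have hNtop : N ≠ ⊤ := by
      intro h
      have : (1 : CornerRing e he) ∈ N := h ▸ Submodule.mem_top
      exact heL this
    have hNM : N = M := by
      by_contra hne
      have : M < N := lt_of_le_of_ne hMN (fun h => hne h.symm)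
      exact hNtop (hM.2 N this)
    show b * a ∈ M
    rw [← hNM]
    show (b * a).1 ∈ L
    exact hbaL
  · intro h
    exact isDeltaReversible_of_ringEquiv (cornerOneEquiv R (one_mul 1)) (h 1 (one_mul 1))
end

section
/- If R is a local ring, then δ#(R) = δ(R), where δ#(R) = {x ∈ R : x^n ∈ δ(R) for some positive integer n}. -/
/-- In a local ring, a right-invertible element is a unit. -/
lemma aux_isUnit_of_right_inv {R : Type*} [Ring R]
    (hlocal : ∀ a b : R, ¬ IsUnit a → ¬ IsUnit b → ¬ IsUnit (a + b))
    {x y : R} (h : x * y = 1) : IsUnit x := by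
  by_cases h2 : y * x = 1
  · exact ⟨⟨x, y, h, h2⟩, rfl⟩
  · set e := y * x with he
    have hidem : e * e = e := by
      have : e * e = y * ((x * y) * x) := by simp [he, mul_assoc]
      rw [h, one_mul] at this
      simpa [he] using this
    by_cases hue : IsUnit e
    · exact absurd (hue.mul_left_cancel (by rw [hidem, mul_one])) h2
    by_cases hue' : IsUnit (1 - e)
    · have h0 : (1 - e) * e = (1 - e) * 0 := by
        rw [sub_mul, one_mul, hidem, sub_self, mul_zero]
      have he0 : e = 0 := hue'.mul_left_cancel h0
      have hx0 : x = 0 := by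
        calc x = (x * y) * x := by rw [h, one_mul]
        _ = x * (y * x) := by rw [mul_assoc]
        _ = 0 := by rw [← he, he0, mul_zero]
      have h10 : (1 : R) = 0 := by rw [← h, hx0, zero_mul]
      exact ⟨⟨x, y, h, by rw [← he, he0, ← h10]⟩, rfl⟩
    · exact absurd (by simp) (hlocal e (1 - e) hue hue')

/-- In a local ring (nonunits are closed under addition), `δ#(R) = δ(R)`. -/
theorem deltaSharp_eq_zhouRadical_of_local (R : Type*) [Ring R]
    (hlocal : ∀ a b : R, ¬ IsUnit a → ¬ IsUnit b → ¬ IsUnit (a + b)) :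
    {x : R | ∃ n : ℕ, 0 < n ∧ x ^ n ∈ zhouRadical R} = zhouRadical R := by
  ext x
  simp only [Set.mem_setOf_eq]
  constructor
  · rintro ⟨n, hn, hx⟩
    intro S hS
    obtain ⟨I, hcoatom, hess, rfl⟩ := hS
    by_contra hxI
    -- I is proper, so units are not in I
    have hnotunit : ∀ z ∈ I, ¬ IsUnit z := by
      intro z hz hu
      apply hcoatom.1
      rw [Submodule.eq_top_iff']
      intro w
      obtain ⟨u, rfl⟩ := hu
      have h1 : (1 : R) ∈ I := by
        have := I.smul_mem (MulOpposite.op ((u⁻¹ : Rˣ) : R)) hz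
        simpa using this
      have := I.smul_mem (MulOpposite.op w) h1
      simpa using this
    -- I ⊔ span {x} = ⊤
    have hsup : I ⊔ Submodule.span Rᵐᵒᵖ {x} = ⊤ := by
      apply hcoatom.2
      rw [left_lt_sup]
      intro hle
      exact hxI (hle (Submodule.mem_span_singleton_self x))
    have h1mem : (1 : R) ∈ I ⊔ Submodule.span Rᵐᵒᵖ {x} := by rw [hsup]; trivial
    obtain ⟨m, hm, s, hs, hms⟩ := Submodule.mem_sup.mp h1mem
    obtain ⟨r, rfl⟩ := Submodule.mem_span_singleton.mp hs
    have hsval : r • x = x * r.unop := rfl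
    -- x * r.unop is a unit, since m is not and m + x*r.unop = 1
    have hxr : IsUnit (x * r.unop) := by
      by_contra hnu
      exact hlocal m (x * r.unop) (hnotunit m hm) hnu (by rw [← hsval, hms]; exact isUnit_one)
    obtain ⟨u, hu⟩ := hxr
    have hxinv : x * (r.unop * ((u⁻¹ : Rˣ) : R)) = 1 := by
      rw [← mul_assoc, ← hu, Units.mul_inv]
    have hxu : IsUnit x := aux_isUnit_of_right_inv hlocal hxinv
    have hxn : x ^ n ∈ I := hx (↑I) ⟨I, hcoatom, hess, rfl⟩
    exact hnotunit _ hxn (hxu.pow n)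
  · intro hx
    exact ⟨1, one_pos, by simpa using hx⟩
end

section
/- Let R be a ring such that the quotient R/δ(R) is reduced, i.e., for every x ∈ R, x² ∈ δ(R) implies x ∈ δ(R). Then R is δ-reversible. -/
/-- If `R/δ(R)` is reduced (i.e. `x² ∈ δ(R)` implies `x ∈ δ(R)`), then `R` is δ-reversible. -/
theorem deltaReversible_of_quotient_reduced (R : Type*) [Ring R]
    (h : ∀ x : R, x * x ∈ zhouRadical R → x ∈ zhouRadical R) :
    IsDeltaReversible R := by
  intro a b hab
  apply h
  have hz : (b * a) * (b * a) = 0 := by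
    calc (b * a) * (b * a) = b * (a * b) * a := by rw [mul_assoc b a (b*a), ← mul_assoc a b a, ← mul_assoc]
    _ = 0 := by rw [hab, mul_zero, zero_mul]
  rw [hz]
  intro S hS
  obtain ⟨I, -, -, rfl⟩ := hS
  exact I.zero_mem
end

section
/- Every δ-clean ring is δ-reversible; that is, if every element x of a ring R can be written as x = e + d with e² = e and d ∈ δ(R), then for all a, b ∈ R, ab = 0 implies ba ∈ δ(R). -/
section Aux

variable {R : Type*} [Ring R]

/-- Right-ideal membership is stable under right multiplication. -/
lemma aux_mul_mem {I : Submodule Rᵐᵒᵖ R} {x : R} (hx : x ∈ I) (r : R) : x * r ∈ I :=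
  I.smul_mem (MulOpposite.op r) hx

/-- Left multiplication by a fixed element, as an `Rᵐᵒᵖ`-linear map. -/
def mulLeftOp (e : R) : R →ₗ[Rᵐᵒᵖ] R where
  toFun x := e * x
  map_add' x y := mul_add e x y
  map_smul' r x := by
    show e * (x * r.unop) = (e * x) * r.unop
    rw [mul_assoc]

@[simp] lemma mulLeftOp_apply (e x : R) : mulLeftOp e x = e * x := rfl

end Aux

/-- Every δ-clean ring is δ-reversible. -/
theorem deltaReversible_of_deltaClean (R : Type*) [Ring R]
    (h : ∀ x : R, ∃ e d : R, e * e = e ∧ d ∈ zhouRadical R ∧ x = e + d) :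
    IsDeltaReversible R := by
  intro a b hab
  obtain ⟨e, d, he, hd, hba⟩ := h (b * a)
  intro S hS
  obtain ⟨I, hco, hess, rfl⟩ := hS
  show b * a ∈ I
  have hdI : d ∈ I := hd _ ⟨I, hco, hess, rfl⟩
  -- (b*a)^2 = 0
  have hsq : (e + d) * (e + d) = 0 := by
    rw [← hba]
    calc b * a * (b * a) = b * (a * b) * a := by noncomm_ring
    _ = 0 := by rw [hab]; noncomm_ring
  -- hence e + e*d ∈ I
  have hkey : e + e * d ∈ I := by
    have h1 : e + e * d = -(d * e) + -(d * d) := by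
      have : e * e + e * d + d * e + d * d = 0 := by rw [← hsq]; noncomm_ring
      rw [he] at this
      linear_combination (norm := noncomm_ring) this
    rw [h1]
    exact I.add_mem (I.neg_mem (aux_mul_mem hdI e)) (I.neg_mem (aux_mul_mem hdI d))
  -- enough to show e ∈ I
  suffices heI : e ∈ I by
    rw [hba]; exact I.add_mem heI hdI
  by_contra heI
  -- the right ideals eR and (1-e)R
  set eR : Submodule Rᵐᵒᵖ R := LinearMap.range (mulLeftOp e) with heR
  set fR : Submodule Rᵐᵒᵖ R := LinearMap.range (mulLeftOp (1 - e)) with hfR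
  have hmem_eR : ∀ x : R, e * x ∈ eR := fun x => ⟨x, rfl⟩
  have hmem_fR : ∀ x : R, (1 - e) * x ∈ fR := fun x => ⟨x, rfl⟩
  have hfix : ∀ x ∈ eR, e * x = x := by
    rintro x ⟨y, rfl⟩
    show e * (e * y) = e * y
    rw [← mul_assoc, he]
  have hkill : ∀ x ∈ fR, e * x = 0 := by
    rintro x ⟨y, rfl⟩
    show e * ((1 - e) * y) = 0
    rw [← mul_assoc, mul_sub, mul_one, he, sub_self, zero_mul]
  have hdecomp : ∀ x : R, x = e * x + (1 - e) * x := by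
    intro x; noncomm_ring
  -- the candidate essential maximal right ideal N
  set N : Submodule Rᵐᵒᵖ R := (eR ⊓ I) ⊔ fR with hN
  have h_eRI_le_N : eR ⊓ I ≤ N := le_sup_left
  have h_fR_le_N : fR ≤ N := le_sup_right
  -- e ∉ N
  have heN : e ∉ N := by
    intro hmem
    obtain ⟨x, hx, z, hz, hxz⟩ := Submodule.mem_sup.mp hmem
    have : e * e = e * x + e * z := by rw [← mul_add, hxz]
    rw [he, hfix x hx.1, hkill z hz] at this
    exact heI (by rw [this, add_zero]; exact hx.2)
  -- N is a maximal right ideal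
  have hNco : IsCoatom N := by
    constructor
    · intro htop
      exact heN (htop ▸ Submodule.mem_top)
    · intro J hJ
      obtain ⟨x, hxJ, hxN⟩ := SetLike.exists_of_lt hJ
      have hNJ : N ≤ J := hJ.le
      have hexJ : e * x ∈ J := by
        have h1 : (1 - e) * x ∈ J := hNJ (h_fR_le_N (hmem_fR x))
        have : e * x = x - (1 - e) * x := by noncomm_ring
        rw [this]; exact J.sub_mem hxJ h1
      have hexI : e * x ∉ I := by
        intro hh
        apply hxN
        rw [hdecomp x]
        exact N.add_mem (h_eRI_le_N ⟨hmem_eR x, hh⟩) (h_fR_le_N (hmem_fR x))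
      -- I ⊔ span {e*x} = ⊤ by maximality of I
      have htop : I ⊔ Submodule.span Rᵐᵒᵖ {e * x} = ⊤ := by
        apply hco.2
        refine lt_of_le_of_ne le_sup_left ?_
        intro hEq
        exact hexI (hEq ▸ Submodule.mem_sup_right (Submodule.mem_span_singleton_self _))
      obtain ⟨i, hi, s, hs, his⟩ := Submodule.mem_sup.mp (htop ▸ Submodule.mem_top (x := e))
      obtain ⟨c, rfl⟩ := Submodule.mem_span_singleton.mp hs
      -- c • (e*x) = (e*x) * c.unop
      have hie : i ∈ eR := by
        have h3 : i + (e * x) * c.unop = e := his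
        have h4 : i = e * (1 - x * c.unop) := by
          rw [eq_sub_of_add_eq h3]; noncomm_ring
        rw [h4]; exact hmem_eR _
      have hiJ : i ∈ J := hNJ (h_eRI_le_N ⟨hie, hi⟩)
      have heJ : e ∈ J := by
        rw [← his]
        exact J.add_mem hiJ (J.smul_mem c hexJ)
      have h1J : (1 : R) ∈ J := by
        have hfJ : (1 : R) - e ∈ J := by
          have : (1 : R) - e = (1 - e) * 1 := by rw [mul_one]
          rw [this]; exact hNJ (h_fR_le_N (hmem_fR 1))
        have := J.add_mem heJ hfJ
        rwa [add_sub_cancel] at this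
      exact Submodule.eq_top_iff'.mpr fun y => by
        have := J.smul_mem (MulOpposite.op y) h1J
        rwa [show MulOpposite.op y • (1 : R) = y from one_mul y] at this
  -- N is essential
  have hNess : IsEssentialRightIdeal R N := by
    intro K hK
    have hLbot : Submodule.map (mulLeftOp e) K ⊓ I = ⊥ := by
      rw [eq_bot_iff]
      rintro y ⟨hyL, hyI⟩
      obtain ⟨k, hkK, rfl⟩ := hyL
      have hkN : k ∈ N := by
        rw [hdecomp k]
        exact N.add_mem (h_eRI_le_N ⟨hmem_eR k, hyI⟩) (h_fR_le_N (hmem_fR k))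
      have : k ∈ K ⊓ N := ⟨hkK, hkN⟩
      rw [hK] at this
      simp only [Submodule.mem_bot] at this
      simp [this]
    have hL : Submodule.map (mulLeftOp e) K = ⊥ := hess _ hLbot
    rw [eq_bot_iff]
    intro k hkK
    have hek : e * k = 0 := by
      have : (mulLeftOp e) k ∈ Submodule.map (mulLeftOp e) K := ⟨k, hkK, rfl⟩
      rw [hL] at this
      simpa using this
    have hkN : k ∈ N := by
      have hk1 : (1 - e) * k = k := by rw [sub_mul, one_mul, hek, sub_zero]
      rw [← hk1]
      exact h_fR_le_N (hmem_fR k)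
    have : k ∈ K ⊓ N := ⟨hkK, hkN⟩
    rw [hK] at this
    exact this
  -- so d ∈ N, giving e*d ∈ I, giving e ∈ I: contradiction
  have hdN : d ∈ N := hd _ ⟨N, hNco, hNess, rfl⟩
  obtain ⟨x, hx, z, hz, hxz⟩ := Submodule.mem_sup.mp hdN
  have hedI : e * d ∈ I := by
    have : e * d = e * x + e * z := by rw [← mul_add, hxz]
    rw [this, hfix x hx.1, hkill z hz, add_zero]
    exact hx.2
  exact heI (by have := I.sub_mem hkey hedI; rwa [add_sub_cancel_right] at this)
end

section
/- Let R be a ring and let a, p ∈ R be such that a^n = 0 for some positive integer n, p² = p, ap = pa, and a + p ∈ δ(R). Then p ∈ δ(R). -/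
/-- If `a` is nilpotent, `p` is an idempotent commuting with `a`, and `a + p ∈ δ(R)`,
then `p ∈ δ(R)`. -/
theorem idem_mem_zhouRadical_of_nilpotent (R : Type*) [Ring R] (a p : R)
    (n : ℕ) (hn : 0 < n) (ha : a ^ n = 0) (hp : p * p = p) (hcomm : a * p = p * a)
    (hap : a + p ∈ zhouRadical R) : p ∈ zhouRadical R := by
  have hc : Commute p a := hcomm.symm
  have hc1 : Commute p (1 + a) := (Commute.one_right p).add_right hc
  have key : ∀ m : ℕ, (a + p) ^ m = p * ((1 + a) ^ m - a ^ m) + a ^ m := by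
    intro m
    induction m with
    | zero => simp
    | succ m ih =>
      have hX : p * (1 + a) ^ m = (1 + a) ^ m * p := (hc1.pow_right m).eq
      have hY : p * a ^ m = a ^ m * p := (hc.pow_right m).eq
      have e1 : p * (1 + a) ^ m * p = p * (1 + a) ^ m := by
        rw [hX, mul_assoc, hp, ← hX]
      have e2 : p * a ^ m * p = p * a ^ m := by
        rw [hY, mul_assoc, hp, ← hY]
      rw [pow_succ, ih, pow_succ, pow_succ]
      calc (p * ((1 + a) ^ m - a ^ m) + a ^ m) * (a + p)
          = p * (1 + a) ^ m * a + p * (1 + a) ^ m * p - p * a ^ m * a - p * a ^ m * p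
            + (a ^ m * a + a ^ m * p) := by noncomm_ring
        _ = p * (1 + a) ^ m * a + p * (1 + a) ^ m - p * a ^ m * a - p * a ^ m
            + (a ^ m * a + p * a ^ m) := by rw [e1, e2, hY]
        _ = p * ((1 + a) ^ m * (1 + a) - a ^ m * a) + a ^ m * a := by noncomm_ring
  have hu : IsUnit ((1 + a) ^ n) := (IsNilpotent.isUnit_one_add ⟨n, ha⟩).pow n
  obtain ⟨u, hu⟩ := hu
  have hpe : p = (a + p) ^ n * ↑u⁻¹ := by
    have : (a + p) ^ n = p * (1 + a) ^ n := by rw [key n, ha]; simp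
    rw [this, ← hu, mul_assoc, Units.mul_inv, mul_one]
  intro S hS
  obtain ⟨I, hco, hess, rfl⟩ := hS
  have h1 : a + p ∈ I := hap _ ⟨I, hco, hess, rfl⟩
  have h2 : p = MulOpposite.op ((a + p) ^ (n - 1) * ↑u⁻¹) • (a + p) := by
    rw [op_smul_eq_mul, ← mul_assoc, ← pow_succ', Nat.sub_add_cancel hn]; exact hpe
  rw [h2]
  exact I.smul_mem _ h1
end

section
/- The matrix ring M₂(ℤ) of 2×2 matrices over the integers is not δ-reversible; that is, there exist A, B ∈ M₂(ℤ) with AB = 0 but BA ∉ δ(M₂(ℤ)). -/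
abbrev R2 := Matrix (Fin 2) (Fin 2) ℤ

def topRowEven : Submodule R2ᵐᵒᵖ R2 where
  carrier := {M | ∀ j, (2:ℤ) ∣ M 0 j}
  add_mem' := fun ha hb j => (ha j).add (hb j)
  zero_mem' := fun j => ⟨0, by simp⟩
  smul_mem' := by
    intro c M hM j
    have h : c • M = M * c.unop := rfl
    rw [h, Matrix.mul_apply]
    exact Finset.dvd_sum fun k _ => (hM k).mul_right _

lemma mem_topRowEven {M : R2} : M ∈ topRowEven ↔ ∀ j, (2:ℤ) ∣ M 0 j := Iff.rfl

lemma topRowEven_essential : ∀ K : Submodule R2ᵐᵒᵖ R2, K ⊓ topRowEven = ⊥ → K = ⊥ := by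
  intro K hK
  rw [Submodule.eq_bot_iff]
  intro x hx
  have h2 : x + x ∈ K ⊓ topRowEven := by
    refine ⟨K.add_mem hx hx, fun j => ⟨x 0 j, by simp [Matrix.add_apply]; ring⟩⟩
  rw [hK, Submodule.mem_bot] at h2
  ext i j
  have := congrFun (congrFun h2 i) j
  simp only [Matrix.add_apply, Matrix.zero_apply] at this ⊢
  omega

lemma topRowEven_coatom : IsCoatom topRowEven := by
  constructor
  · intro h
    have : (1 : R2) ∈ topRowEven := h ▸ Submodule.mem_top
    have := this 0
    simp at this
  · intro J hJ
    obtain ⟨M, hMJ, hMI⟩ := SetLike.exists_of_lt hJ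
    rw [mem_topRowEven] at hMI
    push_neg at hMI
    obtain ⟨j, hj⟩ := hMI
    have hIJ : topRowEven ≤ J := le_of_lt hJ
    -- N = M * E(j,0) ∈ J, with N 0 0 = M 0 j odd, and N has column 1 zero
    set N : R2 := M * Matrix.single j (0:Fin 2) (1:ℤ) with hN
    have hNJ : N ∈ J := by
      have : N = (MulOpposite.op (Matrix.single j (0:Fin 2) (1:ℤ))) • M := rfl
      rw [this]; exact J.smul_mem _ hMJ
    have hN00 : N 0 0 = M 0 j := by
      fin_cases j <;>
        simp [hN, Matrix.mul_apply, Matrix.single, Fin.sum_univ_two]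
    -- e11 ∈ J
    have he11 : (Matrix.single 0 0 (1:ℤ) : R2) ∈ J := by
      obtain ⟨k, hk⟩ : ∃ k, M 0 j = 2 * k + 1 := by
        rcases Int.even_or_odd (M 0 j) with he | ho
        · exact absurd he.two_dvd hj
        · exact ho
      have hrest : N - Matrix.single 0 0 (1:ℤ) ∈ topRowEven := by
        intro l
        fin_cases l
        · refine ⟨k, ?_⟩
          simp [Matrix.single, hN00 ▸ hk]
        · simp [hN, Matrix.mul_apply, Matrix.single, Fin.sum_univ_two]
      have := J.sub_mem hNJ (hIJ hrest)
      simpa using this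
    -- now J = ⊤
    rw [eq_top_iff]
    intro P _
    have hQ : (Matrix.single 0 0 (1:ℤ) : R2) * P ∈ J := by
      have : (Matrix.single 0 0 (1:ℤ) : R2) * P
          = (MulOpposite.op P) • (Matrix.single 0 0 (1:ℤ) : R2) := rfl
      rw [this]; exact J.smul_mem _ he11
    have hrest : P - (Matrix.single 0 0 (1:ℤ) : R2) * P ∈ topRowEven := by
      intro l
      refine ⟨0, ?_⟩
      simp [Matrix.mul_apply, Matrix.single, Fin.sum_univ_two]
    have := J.add_mem hQ (hIJ hrest)
    simpa using this

/-- The ring `M₂(ℤ)` is not δ-reversible. -/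
theorem matrix_int_not_deltaReversible :
    ¬ IsDeltaReversible (Matrix (Fin 2) (Fin 2) ℤ) := by
  intro h
  have hAB : (Matrix.single (0:Fin 2) (1:Fin 2) (1:ℤ) : R2)
      * Matrix.single (0:Fin 2) (0:Fin 2) (1:ℤ) = 0 := by
    ext i j
    simp [Matrix.mul_apply, Matrix.single, Fin.sum_univ_two]
  have hmem := h _ _ hAB
  have hBA : (Matrix.single (0:Fin 2) (0:Fin 2) (1:ℤ) : R2)
      * Matrix.single (0:Fin 2) (1:Fin 2) (1:ℤ)
      = Matrix.single (0:Fin 2) (1:Fin 2) (1:ℤ) := by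
    ext i j
    fin_cases i <;> fin_cases j <;>
      simp [Matrix.mul_apply, Matrix.single, Fin.sum_univ_two]
  rw [hBA] at hmem
  have hin := hmem _ ⟨topRowEven, topRowEven_coatom, topRowEven_essential, rfl⟩
  have h2 := (mem_topRowEven.mp hin) 1
  simp [Matrix.single] at h2
end

section
/- Let R be a ring. If the formal power series ring R[[x]] is δ-reversible, then R is δ-reversible. -/
section Aux

variable {R : Type*} [Ring R]

lemma rightIdeal_eq_top_of_one_mem (K : Submodule Rᵐᵒᵖ R) (h1 : (1 : R) ∈ K) : K = ⊤ := by
  rw [Submodule.eq_top_iff']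
  intro x
  have := K.smul_mem (MulOpposite.op x) h1
  simpa [MulOpposite.smul_eq_mul_unop] using this

/-- Lift a right ideal of `R` to the right ideal of `R[[x]]` of power series whose
constant coefficient lies in it. -/
def liftIdeal (M : Submodule Rᵐᵒᵖ R) : Submodule (PowerSeries R)ᵐᵒᵖ (PowerSeries R) where
  carrier := {f | PowerSeries.constantCoeff f ∈ M}
  add_mem' := by
    intro a b ha hb
    simp only [Set.mem_setOf_eq, map_add] at *
    exact M.add_mem ha hb
  zero_mem' := by simp
  smul_mem' := by
    intro c f hf
    simp only [Set.mem_setOf_eq] at *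
    have : c • f = f * c.unop := rfl
    rw [this, map_mul]
    have := M.smul_mem (MulOpposite.op (PowerSeries.constantCoeff c.unop)) hf
    simpa [MulOpposite.smul_eq_mul_unop] using this

lemma mem_liftIdeal {M : Submodule Rᵐᵒᵖ R} {f : PowerSeries R} :
    f ∈ liftIdeal M ↔ PowerSeries.constantCoeff f ∈ M := Iff.rfl

lemma liftIdeal_isCoatom {M : Submodule Rᵐᵒᵖ R} (hM : IsCoatom M) : IsCoatom (liftIdeal M) := by
  constructor
  · intro htop
    apply hM.1
    apply rightIdeal_eq_top_of_one_mem
    have : (1 : PowerSeries R) ∈ liftIdeal M := htop ▸ Submodule.mem_top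
    simpa [mem_liftIdeal] using this
  · intro K hK
    obtain ⟨f, hfK, hfJ⟩ := SetLike.exists_of_lt hK
    set c := PowerSeries.constantCoeff f with hc
    have hcM : c ∉ M := hfJ
    have hsup : M ⊔ Submodule.span Rᵐᵒᵖ {c} = ⊤ := by
      apply hM.2
      refine lt_of_le_of_ne le_sup_left ?_
      intro heq
      exact hcM (heq ▸ Submodule.mem_sup_right (Submodule.mem_span_singleton_self c))
    have h1 : (1 : R) ∈ M ⊔ Submodule.span Rᵐᵒᵖ {c} := hsup ▸ Submodule.mem_top
    obtain ⟨m, hm, z, hz, hmz⟩ := Submodule.mem_sup.mp h1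
    obtain ⟨r, hr⟩ := Submodule.mem_span_singleton.mp hz
    -- z = op r • c = c * r.unop
    have hz' : z = c * r.unop := by rw [← hr]; rfl
    apply rightIdeal_eq_top_of_one_mem
    have hfr : f * PowerSeries.C r.unop ∈ K :=
      K.smul_mem (MulOpposite.op (PowerSeries.C r.unop)) hfK
    have hdiff : (1 : PowerSeries R) - f * PowerSeries.C r.unop ∈ K := by
      apply hK.le
      rw [mem_liftIdeal]
      have : PowerSeries.constantCoeff (1 - f * PowerSeries.C r.unop) = m := by
        simp [map_sub, map_mul, ← hc, ← hz', ← hmz]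
      rw [this]; exact hm
    have := K.add_mem hdiff hfr
    simpa using this

lemma liftIdeal_essential {M : Submodule Rᵐᵒᵖ R} (hM : IsEssentialRightIdeal R M) :
    IsEssentialRightIdeal (PowerSeries R) (liftIdeal M) := by
  intro K hK
  by_contra hKne
  obtain ⟨f, hfK, hf0⟩ := Submodule.exists_mem_ne_zero_of_ne_bot hKne
  have hex : ∃ n, PowerSeries.coeff n f ≠ 0 := by
    by_contra h'
    push_neg at h'
    exact hf0 (PowerSeries.ext fun n => by simpa using h' n)
  classical
  set n := Nat.find hex with hn
  have ha : PowerSeries.coeff n f ≠ 0 := Nat.find_spec hex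
  set a := PowerSeries.coeff n f with hadef
  rcases Nat.eq_zero_or_pos n with hn0 | hnpos
  · -- constant coefficient of f is a ≠ 0; use essentiality of M
    have hspan : Submodule.span Rᵐᵒᵖ {a} ⊓ M ≠ ⊥ := by
      intro hbot
      have := hM _ hbot
      have ha' : a ∈ (⊥ : Submodule Rᵐᵒᵖ R) := this ▸ Submodule.mem_span_singleton_self a
      exact ha (by simpa using ha')
    obtain ⟨y, hy, hy0⟩ := Submodule.exists_mem_ne_zero_of_ne_bot hspan
    obtain ⟨r, hr⟩ := Submodule.mem_span_singleton.mp hy.1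
    have hy' : y = a * r.unop := by rw [← hr]; rfl
    -- g := f * C r.unop lies in K ∩ J and is nonzero
    have hgK : f * PowerSeries.C r.unop ∈ K :=
      K.smul_mem (MulOpposite.op (PowerSeries.C r.unop)) hfK
    have hgc : PowerSeries.constantCoeff (f * PowerSeries.C r.unop) = y := by
      rw [map_mul, PowerSeries.constantCoeff_C, hy', hadef, hn0,
        PowerSeries.coeff_zero_eq_constantCoeff]
    have hgJ : f * PowerSeries.C r.unop ∈ liftIdeal M := by
      rw [mem_liftIdeal, hgc]; exact hy.2
    have : f * PowerSeries.C r.unop ∈ K ⊓ liftIdeal M := ⟨hgK, hgJ⟩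
    rw [hK] at this
    have hg0 : f * PowerSeries.C r.unop = 0 := (Submodule.mem_bot _).mp this
    exact hy0 (by rw [← hgc, hg0, map_zero])
  · -- f itself lies in K ∩ J and is nonzero
    have hfJ : f ∈ liftIdeal M := by
      rw [mem_liftIdeal]
      have h0 : PowerSeries.coeff 0 f = 0 := by
        by_contra hne
        exact absurd hne (Nat.find_min hex hnpos)
      have : PowerSeries.constantCoeff f = 0 := by simpa using h0
      rw [this]; exact M.zero_mem
    have : f ∈ K ⊓ liftIdeal M := ⟨hfK, hfJ⟩
    rw [hK] at this
    exact hf0 ((Submodule.mem_bot _).mp this)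

end Aux

/-- If the power series ring `R[[x]]` is δ-reversible, then so is `R`. -/
theorem deltaReversible_of_powerSeries (R : Type*) [Ring R]
    (h : IsDeltaReversible (PowerSeries R)) : IsDeltaReversible R := by
  intro a b hab
  have hC : (PowerSeries.C a) * (PowerSeries.C b) = 0 := by
    rw [← map_mul, hab, map_zero]
  have hδ := h _ _ hC
  rw [← map_mul] at hδ
  intro S hS
  obtain ⟨M, hMco, hMess, rfl⟩ := hS
  have hmem : PowerSeries.C (b * a) ∈ liftIdeal M :=
    hδ _ ⟨liftIdeal M, liftIdeal_isCoatom hMco, liftIdeal_essential hMess, rfl⟩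
  rw [mem_liftIdeal] at hmem
  simpa using hmem
end

section
/- Let R be a ring and n a positive integer. If the ring T_n(R) of n×n upper triangular matrices over R is δ-reversible, then R is δ-reversible. -/
/-- The ring `T_n(R)` of `n × n` upper triangular matrices over `R`, as a subring of the
matrix ring `M_n(R)`. -/
def upperTriangularRing (R : Type*) [Ring R] (n : ℕ) :
    Subring (Matrix (Fin n) (Fin n) R) where
  carrier := {A | ∀ i j : Fin n, j < i → A i j = 0}
  zero_mem' := by intro i j _; rfl
  one_mem' := by
    intro i j hij
    exact Matrix.one_apply_ne (ne_of_gt hij)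
  add_mem' := by
    intro A B hA hB i j hij
    simp [Matrix.add_apply, hA i j hij, hB i j hij]
  neg_mem' := by
    intro A hA i j hij
    simp [Matrix.neg_apply, hA i j hij]
  mul_mem' := by
    intro A B hA hB i j hij
    rw [Matrix.mul_apply]
    apply Finset.sum_eq_zero
    intro k _
    rcases lt_or_ge k i with h | h
    · rw [hA i k h, zero_mul]
    · rw [hB k j (lt_of_lt_of_le hij h), mul_zero]

namespace DRAux
variable {R : Type*} [Ring R] {n : ℕ}

section
variable (hn : 0 < n)

def e (hn : 0 < n) : Fin n := ⟨n - 1, Nat.sub_lt hn one_pos⟩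

lemma le_e (k : Fin n) : k ≤ e hn := Nat.le_pred_of_lt k.isLt

variable {S : Type} 

lemma mul_apply_e (A B : (upperTriangularRing R n)) :
    (↑(A * B) : Matrix (Fin n) (Fin n) R) (e hn) (e hn)
      = (A : Matrix (Fin n) (Fin n) R) (e hn) (e hn) *
        (B : Matrix (Fin n) (Fin n) R) (e hn) (e hn) := by
  change ((A : Matrix (Fin n) (Fin n) R) * B) (e hn) (e hn) = _
  rw [Matrix.mul_apply]
  apply Finset.sum_eq_single (e hn)
  · intro k _ hk
    rw [A.2 (e hn) k (lt_of_le_of_ne (le_e hn k) hk), zero_mul]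
  · intro hmem; exact absurd (Finset.mem_univ _) hmem

def iota (hn : 0 < n) (r : R) : upperTriangularRing R n :=
  ⟨Matrix.single (e hn) (e hn) r, by
    intro i j hij
    apply Matrix.single_apply_of_ne
    rintro ⟨rfl, rfl⟩
    exact lt_irrefl _ hij⟩

lemma iota_apply (r : R) :
    ((iota hn r : upperTriangularRing R n) : Matrix (Fin n) (Fin n) R) (e hn) (e hn) = r :=
  Matrix.single_apply_same _ _ _

lemma iota_mul (r s : R) : iota hn r * iota hn s = iota hn (r * s) := by
  apply Subtype.ext
  apply Matrix.single_mul_single_same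

def Mmod (hn : 0 < n) (I : Submodule Rᵐᵒᵖ R) :
    Submodule (upperTriangularRing R n)ᵐᵒᵖ (upperTriangularRing R n) where
  carrier := {A | (A : Matrix (Fin n) (Fin n) R) (e hn) (e hn) ∈ I}
  zero_mem' := I.zero_mem
  add_mem' := fun hA hB => I.add_mem hA hB
  smul_mem' := by
    intro c A hA
    have h1 : c • A = A * c.unop := rfl
    show ((c • A : upperTriangularRing R n) : Matrix (Fin n) (Fin n) R) (e hn) (e hn) ∈ I
    rw [h1, mul_apply_e hn]
    exact I.smul_mem (MulOpposite.op _) hA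

lemma mem_Mmod {I : Submodule Rᵐᵒᵖ R} {A : upperTriangularRing R n} :
    A ∈ Mmod hn I ↔ (A : Matrix (Fin n) (Fin n) R) (e hn) (e hn) ∈ I := Iff.rfl

lemma one_apply_e :
    ((1 : upperTriangularRing R n) : Matrix (Fin n) (Fin n) R) (e hn) (e hn) = 1 :=
  Matrix.one_apply_eq _

lemma Mmod_coatom {I : Submodule Rᵐᵒᵖ R} (hI : IsCoatom I) : IsCoatom (Mmod hn I) := by
  have h1I : (1 : R) ∉ I := by
    intro h1
    apply hI.1
    rw [Submodule.eq_top_iff']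
    intro x
    simpa using I.smul_mem (MulOpposite.op x) h1
  constructor
  · intro htop
    apply h1I
    have : (1 : upperTriangularRing R n) ∈ Mmod hn I := htop ▸ Submodule.mem_top
    rwa [mem_Mmod, one_apply_e] at this
  · intro N hN
    obtain ⟨A, hAN, hAM⟩ := SetLike.exists_of_lt hN
    rw [mem_Mmod] at hAM
    set x := (A : Matrix (Fin n) (Fin n) R) (e hn) (e hn) with hx
    have hlt : I < I ⊔ Submodule.span Rᵐᵒᵖ {x} := by
      refine lt_of_le_of_ne le_sup_left ?_
      intro heq
      exact hAM (heq ▸ Submodule.mem_sup_right (Submodule.mem_span_singleton_self x))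
    have htop : I ⊔ Submodule.span Rᵐᵒᵖ {x} = ⊤ := hI.2 _ hlt
    have h1 : (1 : R) ∈ I ⊔ Submodule.span Rᵐᵒᵖ {x} := htop ▸ Submodule.mem_top
    rw [Submodule.mem_sup] at h1
    obtain ⟨m, hm, y, hy, hmy⟩ := h1
    rw [Submodule.mem_span_singleton] at hy
    obtain ⟨c, rfl⟩ := hy
    -- 1 = m + x * c.unop
    have hB : A * iota hn c.unop ∈ N := N.smul_mem (MulOpposite.op (iota hn c.unop)) hAN
    have hM1 : (1 : upperTriangularRing R n) - A * iota hn c.unop ∈ Mmod hn I := by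
      rw [mem_Mmod]
      have heq1 : ((1 - A * iota hn c.unop : upperTriangularRing R n) :
          Matrix (Fin n) (Fin n) R) (e hn) (e hn)
          = 1 - x * c.unop := by
        rw [show ((1 - A * iota hn c.unop : upperTriangularRing R n) :
            Matrix (Fin n) (Fin n) R)
            = ((1 : upperTriangularRing R n) : Matrix (Fin n) (Fin n) R)
              - ((A * iota hn c.unop : upperTriangularRing R n) :
                Matrix (Fin n) (Fin n) R) from rfl]
        rw [Matrix.sub_apply, one_apply_e hn, mul_apply_e hn, iota_apply hn]
      rw [heq1]
      have heq2 : (1 : R) - x * c.unop = m := by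
        rw [← hmy, MulOpposite.smul_eq_mul_unop]
        abel
      rw [heq2]; exact hm
    have h1N : (1 : upperTriangularRing R n) ∈ N := by
      have := N.add_mem (hN.le hM1) hB
      simpa using this
    rw [Submodule.eq_top_iff']
    intro C
    simpa using N.smul_mem (MulOpposite.op C) h1N

lemma Mmod_essential {I : Submodule Rᵐᵒᵖ R} (hI : IsEssentialRightIdeal R I) :
    IsEssentialRightIdeal (upperTriangularRing R n) (Mmod hn I) := by
  intro K hK
  set K0 : Submodule Rᵐᵒᵖ R :=
    { carrier := {x | ∃ A ∈ K, (A : Matrix (Fin n) (Fin n) R) (e hn) (e hn) = x}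
      zero_mem' := ⟨0, K.zero_mem, rfl⟩
      add_mem' := by
        rintro x y ⟨A, hA, rfl⟩ ⟨B, hB, rfl⟩
        exact ⟨A + B, K.add_mem hA hB, rfl⟩
      smul_mem' := by
        rintro c x ⟨A, hA, rfl⟩
        refine ⟨A * iota hn c.unop, K.smul_mem (MulOpposite.op (iota hn c.unop)) hA, ?_⟩
        rw [mul_apply_e hn, iota_apply hn]
        rfl } with hK0
  have hK0bot : K0 = ⊥ := by
    apply hI
    rw [eq_bot_iff]
    rintro x ⟨hx1, hx2⟩
    obtain ⟨A, hA, rfl⟩ := hx1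
    have : A ∈ K ⊓ Mmod hn I := ⟨hA, hx2⟩
    rw [hK, Submodule.mem_bot] at this
    subst this
    rfl
  rw [eq_bot_iff]
  intro A hA
  have hx : (A : Matrix (Fin n) (Fin n) R) (e hn) (e hn) ∈ K0 := ⟨A, hA, rfl⟩
  rw [hK0bot, Submodule.mem_bot] at hx
  have : A ∈ K ⊓ Mmod hn I := ⟨hA, by
    show (A : Matrix (Fin n) (Fin n) R) (e hn) (e hn) ∈ I
    rw [hx]; exact I.zero_mem⟩
  rw [hK, Submodule.mem_bot] at this
  rw [this]; exact Submodule.zero_mem ⊥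

end
end DRAux

/-- If the upper triangular matrix ring `T_n(R)` is δ-reversible, then so is `R`. -/
theorem deltaReversible_of_upperTriangular (R : Type*) [Ring R] (n : ℕ) (hn : 0 < n)
    (h : IsDeltaReversible (upperTriangularRing R n)) : IsDeltaReversible R := by
  intro a b hab
  intro Sset hSset
  obtain ⟨I, hIco, hIess, rfl⟩ := hSset
  have hprod : DRAux.iota hn a * DRAux.iota hn b = 0 := by
    rw [DRAux.iota_mul, hab]
    apply Subtype.ext
    exact Matrix.single_zero _ _
  have hmem := h _ _ hprod
  have hM : DRAux.iota hn b * DRAux.iota hn a ∈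
      ((DRAux.Mmod hn I : Submodule (upperTriangularRing R n)ᵐᵒᵖ _) :
        Set (upperTriangularRing R n)) :=
    hmem _ ⟨DRAux.Mmod hn I, DRAux.Mmod_coatom hn hIco, DRAux.Mmod_essential hn hIess, rfl⟩
  rw [DRAux.iota_mul] at hM
  have hfin : ((DRAux.iota hn (b * a) : upperTriangularRing R n) :
      Matrix (Fin n) (Fin n) R) (DRAux.e hn) (DRAux.e hn) ∈ I := hM
  rwa [DRAux.iota_apply hn] at hfin
end
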